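/- For objects T₁, T₂ of an abelian category A and integers m, n ≥ 1, one has ⟨T₁⟩ₘ ⋄ ⟨T₂⟩ₙ ⊆ ⟨T₁ ⊕ T₂⟩ₘ₊ₙ. -/

import Mathlib

open CategoryTheory CategoryTheory.Limits

attribute [local instance] CategoryTheory.Abelian.hasFiniteBiproducts

universe v u

variable {A : Type u} [Category.{v} A] [Abelian A]

/-- The objects that are direct summands of finite direct sums of objects from `S`. -/
def addClosure (S : Set A) : Set A :=
  {X | ∃ (n : ℕ) (f : Fin n → A) (Y : A),
    (∀ i, f i ∈ S) ∧ Nonempty ((X ⊞ Y) ≅ ⨁ f)}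

/-- The operator `U ⋄ V`: the additive closure of the middle terms of short exact
sequences with outer terms in `U` and `V`. -/
def diamondSet (U V : Set A) : Set A :=
  addClosure {X | ∃ S : ShortComplex A,
    S.ShortExact ∧ S.X₂ = X ∧ S.X₁ ∈ U ∧ S.X₃ ∈ V}

/-- The filtration `⟨S⟩ₙ`. -/
def bracket (S : Set A) : ℕ → Set A
  | 0 => {X | IsZero X}
  | 1 => addClosure S
  | n + 2 => diamondSet (addClosure S) (bracket S (n + 1))

/-- The extension dimension of an abelian category. -/
noncomputable def extDim (A : Type u) [Category.{v} A] [Abelian A] : ℕ∞ :=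
  sInf {n : ℕ∞ | ∃ (k : ℕ) (T : A), (k : ℕ∞) = n ∧ bracket {T} (k + 1) = Set.univ}

/-- `ClassRes P n X` : there is an exact sequence `0 → Pₙ → ⋯ → P₀ → X → 0` with all `Pᵢ ∈ P`. -/
def ClassRes (P : Set A) : ℕ → A → Prop
  | 0, X => X ∈ P
  | n + 1, X => ∃ S : ShortComplex A,
      S.ShortExact ∧ S.X₃ = X ∧ S.X₂ ∈ P ∧ ClassRes P n S.X₁

/-- `ClassCores I n X` : there is an exact sequence `0 → X → I₀ → ⋯ → Iₙ → 0` with all `Iᵢ ∈ I`. -/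
def ClassCores (I : Set A) : ℕ → A → Prop
  | 0, X => X ∈ I
  | n + 1, X => ∃ S : ShortComplex A,
      S.ShortExact ∧ S.X₁ = X ∧ S.X₂ ∈ I ∧ ClassCores I n S.X₃

noncomputable section

def finOneBiproductIso (f : Fin 1 → A) : (⨁ f) ≅ f 0 where
  hom := biproduct.π f 0
  inv := biproduct.ι f 0
  hom_inv_id := by
    ext j j'
    have h : j = 0 := Subsingleton.elim _ _
    have h' : j' = 0 := Subsingleton.elim _ _
    subst h h'
    simp
  inv_hom_id := by simp

lemma isZero_biproduct_fin_zero (f : Fin 0 → A) : IsZero (⨁ f) := by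
  rw [IsZero.iff_id_eq_zero]
  ext j
  exact j.elim0

def biproductSumElimIso {k l : ℕ} (f : Fin k → A) (g : Fin l → A)
    [HasBiproduct (Sum.elim f g)] :
    (⨁ Sum.elim f g) ≅ (⨁ f) ⊞ (⨁ g) :=
  IsLimit.conePointUniqueUpToIso (biproduct.isLimit (Sum.elim f g))
    (Fan.combPairIsLimit (bc := BinaryFan.mk biprod.fst biprod.snd)
      (biproduct.isLimit f) (biproduct.isLimit g)
      (BinaryBiproduct.isLimit (⨁ f) (⨁ g)))

instance hasBiproductSumElim {k l : ℕ} (f : Fin k → A) (g : Fin l → A) :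
    HasBiproduct (Sum.elim f g) := by
  haveI : HasBiproductsOfShape (Fin k ⊕ Fin l) A :=
    hasBiproductsOfShape_of_equiv A (finSumFinEquiv : Fin k ⊕ Fin l ≃ Fin (k + l))
  infer_instance

/-- `⨁ f ⊞ ⨁ g ≅ ⨁ (Fin.append f g)` -/
def biproductAppendIso {k l : ℕ} (f : Fin k → A) (g : Fin l → A) :
    (⨁ f) ⊞ (⨁ g) ≅ ⨁ (Fin.append f g) :=
  (biproductSumElimIso f g).symm ≪≫
    biproduct.whiskerEquiv (finSumFinEquiv : Fin k ⊕ Fin l ≃ Fin (k + l))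
      (fun j => by
        cases j with
        | inl i => exact eqToIso (by simp)
        | inr i => exact eqToIso (by simp))

/-- decompose a biproduct over `Fin (k+1)` as head ⊞ tail. -/
def biproductConsIso {k : ℕ} (f : Fin (k + 1) → A) :
    (⨁ f) ≅ f 0 ⊞ ⨁ (fun i : Fin k => f i.succ) := by
  refine ?_ ≪≫ biproductSumElimIso (fun _ : Fin 1 => f 0) (fun i : Fin k => f i.succ) ≪≫
    biprod.mapIso (finOneBiproductIso _) (Iso.refl _)
  refine (biproduct.whiskerEquiv
    ((finSumFinEquiv : Fin 1 ⊕ Fin k ≃ Fin (1 + k)).trans (finCongr (Nat.add_comm 1 k)))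
    (fun j => eqToIso ?_)).symm
  cases j with
  | inl i =>
    have : i = 0 := Subsingleton.elim _ _
    subst this
    exact congrArg f (by ext; simp)
  | inr i => exact congrArg f (by ext; simp [Nat.add_comm 1 i.val])

/-- `(W⊞X)⊞(Y⊞Z) ≅ (W⊞Y)⊞(X⊞Z)` -/
def biprodShuffle (W X Y Z : A) : (W ⊞ X) ⊞ (Y ⊞ Z) ≅ (W ⊞ Y) ⊞ (X ⊞ Z) where
  hom := biprod.lift
    (biprod.lift (biprod.fst ≫ biprod.fst) (biprod.snd ≫ biprod.fst))
    (biprod.lift (biprod.fst ≫ biprod.snd) (biprod.snd ≫ biprod.snd))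
  inv := biprod.lift
    (biprod.lift (biprod.fst ≫ biprod.fst) (biprod.snd ≫ biprod.fst))
    (biprod.lift (biprod.fst ≫ biprod.snd) (biprod.snd ≫ biprod.snd))
  hom_inv_id := by ext <;> simp
  inv_hom_id := by ext <;> simp

/-- `⨁ (u i ⊞ v i) ≅ ⨁ u ⊞ ⨁ v` -/
def biproductBiprodIso : ∀ {k : ℕ} (u v : Fin k → A),
    (⨁ fun i => u i ⊞ v i) ≅ (⨁ u) ⊞ (⨁ v)
  | 0, u, v =>
    (isZero_biproduct_fin_zero _).iso
      ((biprod_isZero_iff _ _).2 ⟨isZero_biproduct_fin_zero _, isZero_biproduct_fin_zero _⟩)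
  | (k + 1), u, v =>
    biproductConsIso _ ≪≫
      biprod.mapIso (Iso.refl _) (biproductBiprodIso (fun i => u i.succ) (fun i => v i.succ)) ≪≫
      biprodShuffle _ _ _ _ ≪≫
      biprod.mapIso (biproductConsIso u).symm (biproductConsIso v).symm

end
open ZeroObject
section AddClosure
variable {S : Set A}

lemma addClosure_mono {S T : Set A} (h : S ⊆ T) : addClosure S ⊆ addClosure (T : Set A) :=
  fun X ⟨n, f, Y, hf, he⟩ => ⟨n, f, Y, fun i => h (hf i), he⟩

lemma mem_addClosure_of_summand {X Y Z : A} (e : X ⊞ Y ≅ Z) (hZ : Z ∈ S) :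
    X ∈ addClosure S :=
  ⟨1, fun _ => Z, Y, fun _ => hZ, ⟨e ≪≫ (finOneBiproductIso fun _ => Z).symm⟩⟩

lemma mem_addClosure_self {Z : A} (hZ : Z ∈ S) : Z ∈ addClosure S :=
  mem_addClosure_of_summand
    ((biprod.braiding Z 0) ≪≫ (isoZeroBiprod (isZero_zero A)).symm) hZ

lemma isZero_mem_addClosure {X : A} (hX : IsZero X) : X ∈ addClosure S :=
  ⟨0, Fin.elim0, X, fun i => i.elim0,
    ⟨((biprod_isZero_iff X X).2 ⟨hX, hX⟩).iso (isZero_biproduct_fin_zero _)⟩⟩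

lemma mem_addClosure_of_iso {X X' : A} (e : X ≅ X') (hX : X ∈ addClosure S) :
    X' ∈ addClosure S := by
  obtain ⟨n, f, Y, hf, ⟨he⟩⟩ := hX
  exact ⟨n, f, Y, hf, ⟨biprod.mapIso e.symm (Iso.refl Y) ≪≫ he⟩⟩

lemma biprod_mem_addClosure {X X' : A} (hX : X ∈ addClosure S) (hX' : X' ∈ addClosure S) :
    (X ⊞ X') ∈ addClosure S := by
  obtain ⟨k, f, Y, hf, ⟨e⟩⟩ := hX
  obtain ⟨l, g, Y', hg, ⟨e'⟩⟩ := hX'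
  refine ⟨k + l, Fin.append f g, Y ⊞ Y', fun i => ?_, 
    ⟨biprodShuffle X X' Y Y' ≪≫ biprod.mapIso e e' ≪≫ biproductAppendIso f g⟩⟩
  refine Fin.addCases (fun i => ?_) (fun i => ?_) i
  · rw [Fin.append_left]; exact hf i
  · rw [Fin.append_right]; exact hg i

end AddClosure
open ZeroObject in
/-- The trivial short exact sequence `0 → D → D → 0 → 0`. -/
lemma shortExact_id_zero (D : A) :
    (ShortComplex.mk (𝟙 D) (0 : D ⟶ 0) (by simp)).ShortExact := by
  refine ShortComplex.Splitting.shortExact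
    { r := 𝟙 D
      s := 0
      f_r := by simp
      s_g := (isZero_zero A).eq_of_src _ _
      id := by simp }

/-- The biproduct of two short exact sequences is short exact. -/
lemma shortExact_biprodMk {S₁ S₂ : ShortComplex A} (h₁ : S₁.ShortExact) (h₂ : S₂.ShortExact) :
    (ShortComplex.mk (biprod.map S₁.f S₂.f) (biprod.map S₁.g S₂.g)
      (by ext <;> simp [reassoc_of% S₁.zero, reassoc_of% S₂.zero, S₁.zero, S₂.zero])).ShortExact := by
  haveI := h₁.mono_f; haveI := h₂.mono_f; haveI := h₁.epi_g; haveI := h₂.epi_g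
  refine ShortComplex.ShortExact.mk' ?_ inferInstance inferInstance
  apply ShortComplex.exact_of_f_is_kernel
  refine KernelFork.IsLimit.ofι' _ _ (fun {T} t ht => ?_)
  have h1 : (t ≫ biprod.fst) ≫ S₁.g = 0 := by
    rw [Category.assoc, ← biprod.map_fst S₁.g S₂.g, ← Category.assoc, ht, zero_comp]
  have h2 : (t ≫ biprod.snd) ≫ S₂.g = 0 := by
    rw [Category.assoc, ← biprod.map_snd S₁.g S₂.g, ← Category.assoc, ht, zero_comp]
  obtain ⟨l₁, hl₁⟩ := KernelFork.IsLimit.lift' h₁.fIsKernel _ h1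
  obtain ⟨l₂, hl₂⟩ := KernelFork.IsLimit.lift' h₂.fIsKernel _ h2
  refine ⟨biprod.lift l₁ l₂, ?_⟩
  ext
  · simpa using hl₁
  · simpa using hl₂

/-- Transport a short exact sequence along isomorphisms of its three objects. -/
lemma shortExact_transport {S : ShortComplex A} (hS : S.ShortExact)
    {X₁ X₂ X₃ : A} (e₁ : X₁ ≅ S.X₁) (e₂ : S.X₂ ≅ X₂) (e₃ : S.X₃ ≅ X₃) :
    (ShortComplex.mk (e₁.hom ≫ S.f ≫ e₂.hom) (e₂.inv ≫ S.g ≫ e₃.hom)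
      (by simp [reassoc_of% S.zero, S.zero])).ShortExact := by
  refine ShortComplex.shortExact_of_iso ?_ hS
  refine ShortComplex.isoMk e₁.symm e₂ e₃ ?_ ?_ <;> simp
section Noether
open CategoryTheory.Abelian.Pseudoelement
attribute [local instance] CategoryTheory.Abelian.Pseudoelement.objectToSort
  CategoryTheory.Abelian.Pseudoelement.homToFun
/-- Noether: given `0 → U → B → V → 0` and `0 → B → E → C → 0`, there is `Q` with
`0 → U → E → Q → 0` and `0 → V → Q → C → 0`. -/
lemma noether {U B E C V : A} {j : U ⟶ B} {q : B ⟶ V} {i : B ⟶ E} {p : E ⟶ C}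
    {wjq : j ≫ q = 0} {wip : i ≫ p = 0}
    (h₁ : (ShortComplex.mk j q wjq).ShortExact)
    (h₂ : (ShortComplex.mk i p wip).ShortExact) :
    ∃ (Q : A) (g₁ : E ⟶ Q) (f₂ : V ⟶ Q) (g₂ : Q ⟶ C) (w₁ : (j ≫ i) ≫ g₁ = 0)
      (w₂ : f₂ ≫ g₂ = 0),
      (ShortComplex.mk (j ≫ i) g₁ w₁).ShortExact ∧ (ShortComplex.mk f₂ g₂ w₂).ShortExact := by
  haveI hmj : Mono j := h₁.mono_f
  haveI hmi : Mono i := h₂.mono_f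
  haveI heq : Epi q := h₁.epi_g
  haveI hep : Epi p := h₂.epi_g
  haveI : Mono (j ≫ i) := mono_comp j i
  set Q := cokernel (j ≫ i) with hQ
  set g₁ : E ⟶ Q := cokernel.π (j ≫ i) with hg₁
  -- the first short exact sequence
  have hS₁ : (ShortComplex.mk (j ≫ i) g₁ (cokernel.condition _)).ShortExact := by
    refine ShortComplex.ShortExact.mk' ?_ inferInstance inferInstance
    exact ShortComplex.exact_of_g_is_cokernel _ (cokernelIsCokernel (j ≫ i))
  -- construct f₂ by descending along the cokernel `q`
  obtain ⟨f₂', hf₂'⟩ := CokernelCofork.IsColimit.desc' h₁.gIsCokernel (i ≫ g₁)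
    (by rw [← Category.assoc]; exact cokernel.condition (j ≫ i))
  let f₂ : V ⟶ Q := f₂'
  have hf₂ : q ≫ f₂ = i ≫ g₁ := hf₂'
  clear hf₂'
  set g₂ : Q ⟶ C := cokernel.desc (j ≫ i) p (by rw [Category.assoc, wip, comp_zero]) with hg₂
  have hg₁g₂ : g₁ ≫ g₂ = p := cokernel.π_desc _ _ _
  have w₂ : f₂ ≫ g₂ = 0 := by
    rw [← cancel_epi q, ← Category.assoc, hf₂, Category.assoc, hg₁g₂, wip, comp_zero]
  haveI : Epi g₂ := epi_of_epi_fac hg₁g₂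
  have hmono : Mono f₂ := by
    apply mono_of_zero_of_map_zero
    intro a ha
    obtain ⟨b, hb⟩ := pseudo_surjective_of_epi q a
    have hb' : f₂ a = g₁ (i b) := by
      rw [← hb, ← Abelian.Pseudoelement.comp_apply, hf₂, Abelian.Pseudoelement.comp_apply]
    rw [ha] at hb'
    obtain ⟨u, hu⟩ := pseudo_exact_of_exact hS₁.exact (i b) hb'.symm
    rw [Abelian.Pseudoelement.comp_apply] at hu
    have : j u = b := pseudo_injective_of_mono i hu
    rw [← hb, ← this, ← Abelian.Pseudoelement.comp_apply, wjq, Abelian.Pseudoelement.zero_apply]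
  have hexact : (ShortComplex.mk f₂ g₂ w₂).Exact := by
    apply exact_of_pseudo_exact
    intro b hb
    obtain ⟨e, he⟩ := pseudo_surjective_of_epi g₁ b
    have hp : p e = 0 := by rw [← hg₁g₂, Abelian.Pseudoelement.comp_apply, he]; exact hb
    obtain ⟨b', hb'⟩ := pseudo_exact_of_exact h₂.exact e hp
    refine ⟨q b', ?_⟩
    rw [← Abelian.Pseudoelement.comp_apply, hf₂, Abelian.Pseudoelement.comp_apply, hb', he]
  exact ⟨Q, g₁, f₂, g₂, _, w₂, hS₁, ShortComplex.ShortExact.mk' hexact hmono inferInstance⟩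

end Noether
/-- The middle terms of short exact sequences with ends in `U` and `V`. -/
def extSet (U V : Set A) : Set A :=
  {X | ∃ S : ShortComplex A, S.ShortExact ∧ S.X₂ = X ∧ S.X₁ ∈ U ∧ S.X₃ ∈ V}

lemma diamondSet_eq (U V : Set A) : diamondSet U V = addClosure (extSet U V) := rfl

/-- A class closed under zero objects, isomorphisms and binary biproducts. -/
def SumClosed (P : Set A) : Prop :=
  (∀ X : A, IsZero X → X ∈ P) ∧ (∀ {X X' : A}, (X ≅ X') → X ∈ P → X' ∈ P) ∧
    (∀ {X X' : A}, X ∈ P → X' ∈ P → (X ⊞ X') ∈ P)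

lemma sumClosed_addClosure (S : Set A) : SumClosed (addClosure S) :=
  ⟨fun _ h => isZero_mem_addClosure h, fun e h => mem_addClosure_of_iso e h,
    fun h h' => biprod_mem_addClosure h h'⟩

section ExtSet
variable {U V : Set A}

lemma extSet_mono {U' V' : Set A} (hU : U ⊆ U') (hV : V ⊆ V') :
    extSet U V ⊆ extSet U' V' :=
  fun _ ⟨S, h1, h2, h3, h4⟩ => ⟨S, h1, h2, hU h3, hV h4⟩

lemma diamondSet_mono {U' V' : Set A} (hU : U ⊆ U') (hV : V ⊆ V') :
    diamondSet U V ⊆ diamondSet U' V' :=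
  addClosure_mono (extSet_mono hU hV)

lemma mem_extSet_of_iso {E E' : A} (e : E ≅ E') (hE : E ∈ extSet U V) :
    E' ∈ extSet U V := by
  obtain ⟨S, hS, rfl, h3, h4⟩ := hE
  exact ⟨ShortComplex.mk (S.f ≫ e.hom) ((e.inv ≫ S.g) ≫ 𝟙 S.X₃)
      (by simp [reassoc_of% S.zero, S.zero]),
    by simpa using shortExact_transport hS (Iso.refl S.X₁) e (Iso.refl S.X₃), rfl, h3, h4⟩

open ZeroObject in
lemma isZero_mem_extSet (hU : SumClosed U) (hV : SumClosed V) {Z : A} (hZ : IsZero Z) :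
    Z ∈ extSet U V :=
  ⟨ShortComplex.mk (𝟙 Z) (0 : Z ⟶ 0) (by simp), shortExact_id_zero Z, rfl,
    hU.1 _ hZ, hV.1 _ (isZero_zero A)⟩

lemma biprod_mem_extSet (hU : SumClosed U) (hV : SumClosed V) {E E' : A}
    (hE : E ∈ extSet U V) (hE' : E' ∈ extSet U V) : (E ⊞ E') ∈ extSet U V := by
  obtain ⟨S, hS, rfl, h3, h4⟩ := hE
  obtain ⟨S', hS', rfl, h3', h4'⟩ := hE'
  exact ⟨_, shortExact_biprodMk hS hS', rfl, hU.2.2 h3 h3', hV.2.2 h4 h4'⟩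

lemma biproduct_mem_extSet (hU : SumClosed U) (hV : SumClosed V) :
    ∀ {k : ℕ} (f : Fin k → A), (∀ i, f i ∈ extSet U V) → (⨁ f) ∈ extSet U V
  | 0, f, _ => isZero_mem_extSet hU hV (isZero_biproduct_fin_zero f)
  | (k + 1), f, hf =>
    mem_extSet_of_iso (biproductConsIso f).symm
      (biprod_mem_extSet hU hV (hf 0)
        (biproduct_mem_extSet hU hV (fun i => f i.succ) (fun i => hf i.succ)))

end ExtSet

open ZeroObject in
lemma diamond_assoc {U V W : Set A} (hU : SumClosed U) (hV : SumClosed V)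
    (hW : SumClosed W) :
    diamondSet (diamondSet U V) W ⊆ diamondSet U (diamondSet V W) := by
  intro X hX
  obtain ⟨k, E, Y, hE, ⟨e⟩⟩ := hX
  have h1 : (⨁ E) ∈ extSet (diamondSet U V) W :=
    biproduct_mem_extSet (sumClosed_addClosure _) hW E hE
  obtain ⟨S, hSE, hX₂, hD, hC⟩ := h1
  obtain ⟨r, Bfam, D', hB, ⟨eB⟩⟩ := hD
  have hBB : (⨁ Bfam) ∈ extSet U V := biproduct_mem_extSet hU hV Bfam hB
  obtain ⟨T, hTE, hT₂, hU₀, hV₀⟩ := hBB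
  -- sum of the SES `S` with the trivial SES on `D'`, transported
  have hsum := shortExact_biprodMk hSE (shortExact_id_zero D')
  have htrans := shortExact_transport hsum ((eqToIso hT₂) ≪≫ eB.symm) (Iso.refl _)
    ((biprod.braiding S.X₃ (0 : A)) ≪≫ (isoZeroBiprod (isZero_zero A)).symm)
  -- apply the Noether lemma to `T` and the transported sequence
  obtain ⟨Q, g₁, f₂, g₂, w₁, w₂, hQ₁, hQ₂⟩ := noether (wjq := T.zero) hTE htrans
  have hQmem : Q ∈ diamondSet V W :=
    mem_addClosure_self (⟨_, hQ₂, rfl, hV₀, hC⟩ : Q ∈ extSet V W)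
  have hMmem : (S.X₂ ⊞ D') ∈ extSet U (diamondSet V W) := ⟨_, hQ₁, rfl, hU₀, hQmem⟩
  rw [diamondSet_eq]
  exact mem_addClosure_of_summand
    ((biprod.associator X Y D').symm ≪≫ biprod.mapIso (e ≪≫ eqToIso hX₂.symm) (Iso.refl D'))
    hMmem
lemma sumClosed_bracket (S : Set A) {n : ℕ} (hn : 1 ≤ n) : SumClosed (bracket S n) := by
  match n, hn with
  | 1, _ => exact sumClosed_addClosure S
  | (n + 2), _ => exact sumClosed_addClosure _

lemma diamond_bracket (S : Set A) :
    ∀ m, 1 ≤ m → ∀ n, 1 ≤ n →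
      diamondSet (bracket S m) (bracket S n) ⊆ bracket S (m + n)
  | 1, _, (n + 1), _ => by
    show diamondSet (addClosure S) (bracket S (n + 1)) ⊆ bracket S (1 + (n + 1))
    rw [show 1 + (n + 1) = n + 2 by omega]
    exact subset_rfl
  | (m + 2), _, (n + 1), hn => by
    have step₁ : diamondSet (bracket S (m + 2)) (bracket S (n + 1)) ⊆
        diamondSet (addClosure S) (diamondSet (bracket S (m + 1)) (bracket S (n + 1))) :=
      diamond_assoc (sumClosed_addClosure S) (sumClosed_bracket S (by omega))
        (sumClosed_bracket S (by omega))
    refine step₁.trans ?_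
    refine (diamondSet_mono subset_rfl
      (diamond_bracket S (m + 1) (by omega) (n + 1) hn)).trans ?_
    rw [show m + 1 + (n + 1) = (m + n + 1) + 1 by omega, show m + 2 + (n + 1) = (m + n + 1) + 2 by omega]
    exact subset_rfl

lemma addClosure_singleton_subset {T T' Z : A} (e : T ⊞ Z ≅ T') :
    addClosure ({T} : Set A) ⊆ addClosure ({T'} : Set A) := by
  rintro X ⟨k, f, Y, hf, ⟨e'⟩⟩
  refine ⟨k, fun _ => T', Y ⊞ ⨁ (fun _ : Fin k => Z), fun _ => rfl, ⟨?_⟩⟩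
  calc X ⊞ (Y ⊞ ⨁ (fun _ : Fin k => Z)) ≅ (X ⊞ Y) ⊞ ⨁ (fun _ : Fin k => Z) :=
        (biprod.associator _ _ _).symm
    _ ≅ (⨁ fun _ : Fin k => T) ⊞ ⨁ (fun _ : Fin k => Z) :=
        biprod.mapIso (e' ≪≫ biproduct.mapIso fun i => eqToIso (hf i)) (Iso.refl _)
    _ ≅ ⨁ (fun i : Fin k => T ⊞ Z) := (biproductBiprodIso _ _).symm
    _ ≅ ⨁ (fun _ : Fin k => T') := biproduct.mapIso fun _ => e

lemma bracket_subset_of {S S' : Set A} (h : addClosure S ⊆ addClosure S') :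
    ∀ n, bracket S n ⊆ bracket S' n
  | 0 => subset_rfl
  | 1 => h
  | (n + 2) => diamondSet_mono h (bracket_subset_of h (n + 1))
/-- `⟨T₁⟩ₘ ⋄ ⟨T₂⟩ₙ ⊆ ⟨T₁ ⊕ T₂⟩ₘ₊ₙ` for `m, n ≥ 1`. -/
theorem diamond_bracket_subset (T₁ T₂ : A) (m n : ℕ) (hm : 1 ≤ m) (hn : 1 ≤ n) :
    diamondSet (bracket {T₁} m) (bracket {T₂} n) ⊆ bracket {T₁ ⊞ T₂} (m + n) := by
  have h₁ : bracket ({T₁} : Set A) m ⊆ bracket ({T₁ ⊞ T₂} : Set A) m :=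
    bracket_subset_of (addClosure_singleton_subset (Iso.refl (T₁ ⊞ T₂))) m
  have h₂ : bracket ({T₂} : Set A) n ⊆ bracket ({T₁ ⊞ T₂} : Set A) n :=
    bracket_subset_of (addClosure_singleton_subset (biprod.braiding T₂ T₁)) n
  exact (diamondSet_mono h₁ h₂).trans (diamond_bracket _ m hm n hn)
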